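/- Let G be a finite group with trivial center, let N be a minimal normal subgroup of G, and set F = C_G(N). If a, b are nonidentity elements of G whose distance in the commuting graph Γ(G) is greater than 4 (or they lie in different components), then C_G(a) ∩ F = 1 or C_G(b) ∩ F = 1. -/

import Mathlib

def commGraph (G : Type*) [Group G] : SimpleGraph {g : G // g ≠ 1} where
  Adj a b := a ≠ b ∧ Commute (a : G) (b : G)
  symm := ⟨fun _ _ h => ⟨Ne.symm h.1, h.2.symm⟩⟩
  loopless := ⟨fun _ h => h.1 rfl⟩

lemma comm_walk {G : Type*} [Group G] (u v : {g : G // g ≠ 1})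
    (h : Commute (u : G) (v : G)) :
    ∃ w : (commGraph G).Walk u v, w.length ≤ 1 := by
  by_cases he : u = v
  · subst he; exact ⟨.nil, by simp⟩
  · exact ⟨.cons ⟨he, h⟩ .nil, le_refl _⟩

theorem stmt4 {G : Type*} [Group G] [Finite G] (hZ : Subgroup.center G = ⊥)
    (N : Subgroup G) (hNn : N.Normal) (hNbot : N ≠ ⊥)
    (hNmin : ∀ M : Subgroup G, M.Normal → M ≤ N → M ≠ ⊥ → M = N)
    (a b : G) (ha : a ≠ 1) (hb : b ≠ 1)
    (hdist : ¬ (commGraph G).Reachable ⟨a, ha⟩ ⟨b, hb⟩ ∨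
      4 < (commGraph G).dist ⟨a, ha⟩ ⟨b, hb⟩) :
    Subgroup.centralizer {a} ⊓ Subgroup.centralizer (N : Set G) = ⊥ ∨
      Subgroup.centralizer {b} ⊓ Subgroup.centralizer (N : Set G) = ⊥ := by
  by_contra hcon
  push_neg at hcon
  obtain ⟨hA, hB⟩ := hcon
  obtain ⟨⟨x, hxmem⟩, hx1'⟩ := (Subgroup.ne_bot_iff_exists_ne_one.mp hA)
  obtain ⟨⟨y, hymem⟩, hy1'⟩ := (Subgroup.ne_bot_iff_exists_ne_one.mp hB)
  obtain ⟨⟨n, hnN⟩, hn1'⟩ := (Subgroup.ne_bot_iff_exists_ne_one.mp hNbot)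
  have hx1 : x ≠ 1 := by simpa [Subtype.ext_iff] using hx1'
  have hy1 : y ≠ 1 := by simpa [Subtype.ext_iff] using hy1'
  have hn1 : n ≠ 1 := by simpa [Subtype.ext_iff] using hn1'
  obtain ⟨hxa, hxN⟩ := hxmem
  obtain ⟨hyb, hyN⟩ := hymem
  have hax : Commute a x :=
    Subgroup.mem_centralizer_iff.mp hxa a (by simp)
  have hxn : Commute x n :=
    (Subgroup.mem_centralizer_iff.mp hxN n hnN).symm
  have hny : Commute n y :=
    Subgroup.mem_centralizer_iff.mp hyN n hnN
  have hyb' : Commute y b :=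
    (Subgroup.mem_centralizer_iff.mp hyb b (by simp)).symm
  obtain ⟨w1, hw1⟩ := comm_walk (G := G) ⟨a, ha⟩ ⟨x, hx1⟩ hax
  obtain ⟨w2, hw2⟩ := comm_walk (G := G) ⟨x, hx1⟩ ⟨n, hn1⟩ hxn
  obtain ⟨w3, hw3⟩ := comm_walk (G := G) ⟨n, hn1⟩ ⟨y, hy1⟩ hny
  obtain ⟨w4, hw4⟩ := comm_walk (G := G) ⟨y, hy1⟩ ⟨b, hb⟩ hyb'
  set w := w1.append (w2.append (w3.append w4)) with hw
  have hreach : (commGraph G).Reachable ⟨a, ha⟩ ⟨b, hb⟩ := ⟨w⟩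
  have hlen : w.length ≤ 4 := by
    simp only [hw, SimpleGraph.Walk.length_append]
    omega
  have hd : (commGraph G).dist ⟨a, ha⟩ ⟨b, hb⟩ ≤ 4 :=
    le_trans (SimpleGraph.dist_le w) hlen
  rcases hdist with h | h
  · exact h hreach
  · omega
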